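/- Assume n ≥ 2, u* ∈ bd K_{n+1}, H ∩ int K_{n+1} = ∅, and H ∩ bd K_{n+1} = {u*}. Then for every u ∈ H with u ≠ u*, one has −û ∉ K_{n+1}. -/

import Mathlib

/-- Euclidean norm of the tail `x₁` of `x = (x₀; x₁) ∈ ℝ × ℝⁿ`. -/
noncomputable def tailNorm {n : ℕ} (x : EuclideanSpace ℝ (Fin (n + 1))) : ℝ :=
  Real.sqrt (∑ i : Fin n, x i.succ ^ 2)

/-- The second-order cone `K_{n+1} = {(x₀; x₁) : ‖x₁‖ ≤ x₀}`. -/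
def soc (n : ℕ) : Set (EuclideanSpace ℝ (Fin (n + 1))) :=
  {x | tailNorm x ≤ x 0}

/-- The boundary of the second-order cone: `{(x₀; x₁) : ‖x₁‖ = x₀}`. -/
def socBd (n : ℕ) : Set (EuclideanSpace ℝ (Fin (n + 1))) :=
  {x | tailNorm x = x 0}

/-- The interior of the second-order cone: `{(x₀; x₁) : ‖x₁‖ < x₀}`. -/
def socInt (n : ℕ) : Set (EuclideanSpace ℝ (Fin (n + 1))) :=
  {x | tailNorm x < x 0}

/-- `x̂ = (x₀; −x₁)` for `x = (x₀; x₁)`. -/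
def socHat {n : ℕ} (x : EuclideanSpace ℝ (Fin (n + 1))) : EuclideanSpace ℝ (Fin (n + 1)) :=
  WithLp.toLp 2 (fun i => if i = 0 then x 0 else -(x i))

/-- `B t` viewed as an element of Euclidean space. -/
def mvE {m p : ℕ} (B : Matrix (Fin m) (Fin p) ℝ) (t : Fin p → ℝ) : EuclideanSpace ℝ (Fin m) :=
  WithLp.toLp 2 (fun i => B.mulVec t i)

/-- A Euclidean vector viewed as a plain function. -/
def toFun {m : ℕ} (x : EuclideanSpace ℝ (Fin m)) : Fin m → ℝ := x

/-- Auxiliary: if `0 ≤ 2sc + s²C` for all small `s` and `0 ≤ C`, then `c = 0`. -/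
lemma small_quad_aux3 {c C : ℝ} (hC : 0 ≤ C) (δ₀ : ℝ) (hδ₀ : 0 < δ₀)
    (h : ∀ s : ℝ, |s| ≤ δ₀ → 0 ≤ 2 * s * c + s ^ 2 * C) : c = 0 := by
  by_contra hc
  have hcpos : 0 < |c| := abs_pos.2 hc
  set δ : ℝ := min δ₀ (|c| / (C + 1)) with hδ
  have hδpos : 0 < δ := lt_min hδ₀ (div_pos hcpos (by linarith))
  have hδ1 : δ ≤ δ₀ := min_le_left _ _
  have hδ2 : δ * (C + 1) ≤ |c| := by
    have := min_le_right δ₀ (|c| / (C + 1))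
    calc δ * (C + 1) ≤ (|c| / (C + 1)) * (C + 1) := by
          apply mul_le_mul_of_nonneg_right this (by linarith)
      _ = |c| := by field_simp
  set s : ℝ := if 0 < c then -δ else δ with hs
  have habs : |s| ≤ δ₀ := by
    simp only [hs]; split_ifs <;>
      simp [abs_of_pos hδpos, abs_of_neg (neg_neg_of_pos hδpos)] <;> linarith
  have hkey := h s habs
  have h1 : 2 * s * c = -(2 * δ * |c|) := by
    simp only [hs]; split_ifs with hc'
    · rw [abs_of_pos hc']; ring
    · rw [abs_of_nonpos (not_lt.1 hc')]; ring
  have h2 : s ^ 2 = δ ^ 2 := by simp only [hs]; split_ifs <;> ring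
  rw [h1, h2] at hkey
  nlinarith

/-- Core inner-product-space lemma: if the whole line `a + s b` lies "outside" the
cone constraint and `a + b` is in the negative cone, then `e = -‖b‖` and `a, b`
are antiparallel. -/
lemma core_aux3 {E : Type*} [NormedAddCommGroup E] [InnerProductSpace ℝ E]
    (a b : E) (e : ℝ) (ha : a ≠ 0)
    (h0 : ∀ s : ℝ, ‖a‖ + s * e ≤ ‖a + s • b‖)
    (hu : ‖a + b‖ ≤ -(‖a‖ + e)) :
    e = -‖b‖ ∧ ‖b‖ • a + ‖a‖ • b = 0 := by
  have hanorm : 0 < ‖a‖ := norm_pos_iff.2 ha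
  have he1 : e ≤ ‖b‖ := by
    have := h0 1
    have htr : ‖a + (1:ℝ) • b‖ ≤ ‖a‖ + ‖b‖ := by
      rw [one_smul]; exact norm_add_le _ _
    linarith
  have he2 : -‖b‖ ≤ e := by
    have := h0 (-1)
    have htr : ‖a + (-1:ℝ) • b‖ ≤ ‖a‖ + ‖b‖ := by
      calc ‖a + (-1:ℝ) • b‖ ≤ ‖a‖ + ‖(-1:ℝ) • b‖ := norm_add_le _ _
        _ = ‖a‖ + ‖b‖ := by rw [norm_smul]; simp
    linarith
  have hrev : ‖b‖ - ‖a‖ ≤ ‖a + b‖ := by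
    have h' : ‖b‖ ≤ ‖a + b‖ + ‖a‖ := by
      calc ‖b‖ = ‖(a + b) - a‖ := by rw [add_sub_cancel_left]
        _ ≤ ‖a + b‖ + ‖a‖ := norm_sub_le _ _
    linarith
  have he : e = -‖b‖ := by linarith
  have hC : (0:ℝ) ≤ ‖b‖ ^ 2 - e ^ 2 := by nlinarith
  have hc0 : (inner ℝ a b : ℝ) - e * ‖a‖ = 0 := by
    apply small_quad_aux3 hC (‖a‖ / (|e| + 1)) (by positivity)
    intro s hsabs
    have hre : ‖a‖ + s * e ≥ 0 := by
      have h1 : |s * e| ≤ ‖a‖ := by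
        rw [abs_mul]
        calc |s| * |e| ≤ (‖a‖ / (|e| + 1)) * (|e| + 1) := by
              apply mul_le_mul hsabs (by linarith) (abs_nonneg _)
              positivity
          _ = ‖a‖ := by field_simp
      have := neg_abs_le (s * e)
      linarith
    have hsq : (‖a‖ + s * e) ^ 2 ≤ ‖a + s • b‖ ^ 2 :=
      pow_le_pow_left₀ hre (h0 s) 2
    have hexp : ‖a + s • b‖ ^ 2 = ‖a‖ ^ 2 + 2 * (s * (inner ℝ a b : ℝ)) + s ^ 2 * ‖b‖ ^ 2 := by
      rw [norm_add_sq_real, real_inner_smul_right, norm_smul]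
      simp only [Real.norm_eq_abs, mul_pow, sq_abs]
      try ring
    rw [hexp] at hsq
    nlinarith
  have hinner : (inner ℝ a b : ℝ) = -(‖a‖ * ‖b‖) := by
    rw [he] at hc0; linarith
  refine ⟨he, ?_⟩
  have hz : ‖‖b‖ • a + ‖a‖ • b‖ ^ 2 = 0 := by
    rw [norm_add_sq_real, real_inner_smul_left, real_inner_smul_right, norm_smul, norm_smul,
      hinner]
    simp [abs_of_nonneg (norm_nonneg a), abs_of_nonneg (norm_nonneg b), mul_pow]
    try ring
  have := pow_eq_zero_iff (n := 2) (by norm_num) |>.1 hz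
  exact norm_eq_zero.1 this

/-- The tail of a vector in `ℝ^{n+1}`, as a vector in `ℝ^n`. -/
def tailE3 {n : ℕ} (x : EuclideanSpace ℝ (Fin (n + 1))) : EuclideanSpace ℝ (Fin n) :=
  WithLp.toLp 2 (fun i => x i.succ)

lemma tailNorm_eq_norm3 {n : ℕ} (x : EuclideanSpace ℝ (Fin (n + 1))) :
    tailNorm x = ‖tailE3 x‖ := by
  rw [EuclideanSpace.norm_eq]
  simp [tailNorm, tailE3, Real.norm_eq_abs, sq_abs]

/-- Assume `n ≥ 2`, `u* ∈ bd K_{n+1}`, `H ∩ int K_{n+1} = ∅`, and `H ∩ bd K_{n+1} = {u*}`,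
where `H = {u* + B t : t ∈ ℝ^p}` with `Bᵀ B = I_p`. Then for every `u ∈ H` with `u ≠ u*`,
one has `−û ∉ K_{n+1}`. -/
theorem stmt3 (n p : ℕ) (hn : 2 ≤ n)
    (B : Matrix (Fin (n + 1)) (Fin p) ℝ) (hB : B.transpose * B = 1)
    (ustar : EuclideanSpace ℝ (Fin (n + 1))) (hustar : ustar ∈ socBd n)
    (H : Set (EuclideanSpace ℝ (Fin (n + 1))))
    (hH : H = {u | ∃ t : Fin p → ℝ, u = ustar + mvE B t})
    (hdisj : H ∩ socInt n = ∅)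
    (hsingle : H ∩ socBd n = {ustar}) :
    ∀ u ∈ H, u ≠ ustar → -(socHat u) ∉ soc n := by
  intro u huH hne hK
  obtain ⟨t₀, ht₀⟩ : ∃ t : Fin p → ℝ, u = ustar + mvE B t := by rw [hH] at huH; exact huH
  set d : EuclideanSpace ℝ (Fin (n + 1)) := mvE B t₀ with hd
  set a : EuclideanSpace ℝ (Fin n) := tailE3 ustar with hadef
  set b : EuclideanSpace ℝ (Fin n) := tailE3 d with hbdef
  set e : ℝ := d 0 with hedef
  have hA : ‖a‖ = ustar 0 := by rw [← tailNorm_eq_norm3]; exact hustar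
  -- the line
  have hmv : ∀ s : ℝ, mvE B (s • t₀) = fun i => s * d i := by
    intro s; funext j; simp [hd, mvE, Matrix.mulVec_smul]
  have hvH : ∀ s : ℝ, (ustar + mvE B (s • t₀)) ∈ H := by
    intro s; rw [hH]; exact ⟨s • t₀, rfl⟩
  have hvtail : ∀ s : ℝ, tailE3 (ustar + mvE B (s • t₀)) = a + s • b := by
    intro s; ext i
    show ustar i.succ + mvE B (s • t₀) i.succ = a i + s * b i
    rw [hmv s]
    rfl
  have hv0 : ∀ s : ℝ, (ustar + mvE B (s • t₀)) 0 = ‖a‖ + s * e := by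
    intro s
    show ustar 0 + mvE B (s • t₀) 0 = ‖a‖ + s * e
    rw [hmv s, hA]
  -- in-boundary implies equal to ustar
  have hbd : ∀ x ∈ H, tailNorm x = x 0 → x = ustar := by
    intro x hx h
    have hmem : x ∈ H ∩ socBd n := ⟨hx, h⟩
    rw [hsingle] at hmem
    exact hmem
  -- the line misses the interior
  have h0 : ∀ s : ℝ, ‖a‖ + s * e ≤ ‖a + s • b‖ := by
    intro s
    have hnotint : (ustar + mvE B (s • t₀)) ∉ socInt n := by
      intro h
      have hmem : (ustar + mvE B (s • t₀)) ∈ H ∩ socInt n := ⟨hvH s, h⟩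
      rw [hdisj] at hmem
      exact hmem
    have h' : (ustar + mvE B (s • t₀)) 0 ≤ tailNorm (ustar + mvE B (s • t₀)) :=
      not_lt.1 hnotint
    rwa [tailNorm_eq_norm3, hvtail s, hv0 s] at h'
  -- translate the hypothesis hK
  have hhat_tail : tailE3 (-(socHat u)) = tailE3 u := by
    ext i
    show -(socHat u i.succ) = u i.succ
    simp [socHat, Fin.succ_ne_zero]
  have hhat0 : (-(socHat u)) 0 = -(u 0) := by
    show -(socHat u 0) = -(u 0)
    simp [socHat]
  have hutail : tailE3 u = a + b := by
    have := hvtail 1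
    rw [one_smul, ← ht₀, one_smul] at this
    exact this
  have hu0 : u 0 = ‖a‖ + e := by
    have := hv0 1
    rw [one_smul, ← ht₀, one_mul] at this
    exact this
  have hu' : ‖a + b‖ ≤ -(‖a‖ + e) := by
    have hthis : tailNorm (-(socHat u)) ≤ (-(socHat u)) 0 := hK
    rw [tailNorm_eq_norm3, hhat_tail, hhat0, hutail, hu0] at hthis
    linarith
  by_cases ha : a = 0
  · -- then ustar = 0 and the point at s = -1 gives a contradiction
    have hA0 : ‖a‖ = 0 := by rw [ha]; simp
    have hm1tail : tailE3 (ustar + mvE B ((-1 : ℝ) • t₀)) = a + (-1 : ℝ) • b := hvtail (-1)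
    have hm10 : (ustar + mvE B ((-1 : ℝ) • t₀)) 0 = ‖a‖ + (-1) * e := hv0 (-1)
    have hnormeq : ‖a + (-1 : ℝ) • b‖ = ‖a + b‖ := by
      rw [ha]; simp
    have hle : tailNorm (ustar + mvE B ((-1 : ℝ) • t₀)) ≤ (ustar + mvE B ((-1 : ℝ) • t₀)) 0 := by
      rw [tailNorm_eq_norm3, hm1tail, hm10, hnormeq]
      linarith [hu', hA0]
    rcases lt_or_eq_of_le hle with hlt | heq
    · have hmem : (ustar + mvE B ((-1 : ℝ) • t₀)) ∈ H ∩ socInt n := ⟨hvH (-1), hlt⟩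
      rw [hdisj] at hmem
      exact hmem
    · have hveq := hbd _ (hvH (-1)) heq
      -- ustar + mvE B ((-1) • t₀) = ustar ⇒ d = 0 ⇒ u = ustar
      have hd0 : ∀ i, d i = 0 := by
        intro i
        have h1 : (ustar + mvE B ((-1 : ℝ) • t₀)) i = ustar i := by rw [hveq]
        have h2 : (ustar + mvE B ((-1 : ℝ) • t₀)) i = ustar i + (-1) * d i := by
          show ustar i + mvE B ((-1 : ℝ) • t₀) i = ustar i + (-1) * d i
          rw [hmv (-1)]
        rw [h2] at h1
        linarith
      apply hne
      rw [ht₀]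
      ext i
      show ustar i + d i = ustar i
      rw [hd0 i]; ring
  · obtain ⟨he, hab⟩ := core_aux3 a b e ha h0 hu'
    have hanorm : 0 < ‖a‖ := norm_pos_iff.2 ha
    rcases le_or_gt ‖b‖ ‖a‖ with hle | hlt
    · -- u itself is on the boundary
      have h1 : ‖a‖ • (a + b) = (‖a‖ - ‖b‖) • a := by
        have h2 : ‖a‖ • b = -(‖b‖ • a) := eq_neg_of_add_eq_zero_right hab
        rw [smul_add, h2, sub_smul]
        abel
      have h3 : ‖a‖ * ‖a + b‖ = ‖a‖ * (‖a‖ - ‖b‖) := by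
        calc ‖a‖ * ‖a + b‖ = ‖‖a‖ • (a + b)‖ := by
              rw [norm_smul, Real.norm_eq_abs, abs_of_pos hanorm]
          _ = ‖(‖a‖ - ‖b‖) • a‖ := by rw [h1]
          _ = |‖a‖ - ‖b‖| * ‖a‖ := by rw [norm_smul, Real.norm_eq_abs]
          _ = ‖a‖ * (‖a‖ - ‖b‖) := by rw [abs_of_nonneg (by linarith)]; ring
      have h4 : ‖a + b‖ = ‖a‖ - ‖b‖ := mul_left_cancel₀ (ne_of_gt hanorm) h3
      have hbdmem : tailNorm u = u 0 := by
        rw [tailNorm_eq_norm3, hutail, hu0, h4, he]; ring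
      exact hne (hbd u huH hbdmem)
    · -- second boundary point at s = ‖a‖/‖b‖
      have hbnorm : 0 < ‖b‖ := lt_of_le_of_lt (norm_nonneg a) hlt
      set s : ℝ := ‖a‖ / ‖b‖ with hsdef
      have hspos : 0 < s := div_pos hanorm hbnorm
      have htail0 : a + s • b = 0 := by
        have h5 : ‖b‖ • (a + s • b) = 0 := by
          rw [smul_add, smul_smul]
          have h6 : ‖b‖ * s = ‖a‖ := by
            rw [hsdef]; field_simp
          rw [h6]
          exact hab
        exact (smul_eq_zero.1 h5).resolve_left (ne_of_gt hbnorm)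
      have hvbd : tailNorm (ustar + mvE B (s • t₀)) = (ustar + mvE B (s • t₀)) 0 := by
        rw [tailNorm_eq_norm3, hvtail s, hv0 s, htail0, he]
        have h6 : s * ‖b‖ = ‖a‖ := by rw [hsdef]; field_simp
        simp
        linarith
      have hveq := hbd _ (hvH s) hvbd
      -- then a + s • b = tailE3 ustar = a, so s • b = 0, so b = 0, contradiction
      have h7 : a + s • b = a := by
        rw [← hvtail s, hveq]
      rw [htail0] at h7
      exact ha h7.symm
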